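/- Let f, g be independent square-integrable random vectors in ℝⁿ with means μ_f, μ_g and covariances C_f, C_g, and let Q be a symmetric n×n real matrix. Then Var[fᵀ Q g] = tr[Q C_f Q C_g + Q (μ_f μ_fᵀ) Q C_g + Q C_f Q (μ_g μ_gᵀ)]. -/

import Mathlib

open MeasureTheory Matrix ProbabilityTheory

section aux
set_option linter.unusedSectionVars false
variable {Ω : Type*} [MeasurableSpace Ω] {μ : Measure Ω} [IsProbabilityMeasure μ]

lemma int_mul2 {a b : Ω → ℝ} (ha : MemLp a 2 μ) (hb : MemLp b 2 μ) :
    Integrable (fun ω => a ω * b ω) μ := by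
  rw [← memLp_one_iff_integrable]
  have := MemLp.smul (𝕜 := ℝ) (p := 2) (q := 2) (r := 1) hb ha
  exact this

lemma trace4 {n : ℕ} (Q M N : Matrix (Fin n) (Fin n) ℝ) (hQ : Q.IsSymm) (hN : N.IsSymm) :
    (Q * M * Q * N).trace = ∑ i, ∑ j, ∑ k, ∑ l, Q i j * Q k l * M i k * N j l := by
  have key : ∀ j l, (∑ i, ∑ k, Q i j * Q k l * M i k) = (Q * M * Q) j l := by
    intro j l
    simp only [Matrix.mul_apply, Finset.sum_mul]
    rw [Finset.sum_comm]
    refine Finset.sum_congr rfl fun k _ => Finset.sum_congr rfl fun i _ => ?_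
    rw [hQ.apply i j]
    ring
  calc (Q * M * Q * N).trace = ∑ j, ∑ l, (Q * M * Q) j l * N j l := by
        simp only [Matrix.trace, Matrix.diag, Matrix.mul_apply]
        refine Finset.sum_congr rfl fun j _ => Finset.sum_congr rfl fun l _ => ?_
        rw [hN.apply l j]
    _ = ∑ j, ∑ l, (∑ i, ∑ k, Q i j * Q k l * M i k) * N j l := by
        simp_rw [key]
    _ = ∑ i, ∑ j, ∑ k, ∑ l, Q i j * Q k l * M i k * N j l := by
        simp_rw [Finset.sum_mul]
        refine (Finset.sum_congr rfl fun j _ => Finset.sum_comm).trans ?_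
        rw [Finset.sum_comm]
        refine Finset.sum_congr rfl fun i _ => Finset.sum_congr rfl fun j _ => ?_
        rw [Finset.sum_comm]

lemma sq_double_sum {n : ℕ} (a : Fin n → Fin n → ℝ) :
    (∑ i, ∑ j, a i j) ^ 2 = ∑ i, ∑ j, ∑ k, ∑ l, a i j * a k l := by
  rw [sq, Finset.sum_mul_sum]
  refine Finset.sum_congr rfl fun i _ => ?_
  rw [← Finset.sum_comm]
  refine Finset.sum_congr rfl fun j _ => ?_
  rw [Finset.sum_mul_sum]

end aux

theorem stmt8 {Ω : Type*} [MeasurableSpace Ω] (μ : Measure Ω) [IsProbabilityMeasure μ]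
    (n : ℕ) (f g : Ω → (Fin n → ℝ))
    (hf2 : ∀ k, MemLp (fun ω => f ω k) 2 μ)
    (hg2 : ∀ k, MemLp (fun ω => g ω k) 2 μ)
    (hind : IndepFun f g μ)
    (μf μg : Fin n → ℝ)
    (hμf : ∀ k, μf k = ∫ ω, f ω k ∂μ)
    (hμg : ∀ k, μg k = ∫ ω, g ω k ∂μ)
    (Cf Cg : Matrix (Fin n) (Fin n) ℝ)
    (hCf : ∀ i j, Cf i j = ∫ ω, (f ω i - μf i) * (f ω j - μf j) ∂μ)
    (hCg : ∀ i j, Cg i j = ∫ ω, (g ω i - μg i) * (g ω j - μg j) ∂μ)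
    (Q : Matrix (Fin n) (Fin n) ℝ) (hQ : Q.IsSymm) :
    (∫ ω, ((f ω) ⬝ᵥ Q.mulVec (g ω)) ^ 2 ∂μ)
      - (∫ ω, (f ω) ⬝ᵥ Q.mulVec (g ω) ∂μ) ^ 2
      = (Q * Cf * Q * Cg + Q * vecMulVec μf μf * Q * Cg
          + Q * Cf * Q * vecMulVec μg μg).trace := by
  -- basic integrability
  have hfint : ∀ i, Integrable (fun ω => f ω i) μ := fun i =>
    (hf2 i).integrable (by norm_num)
  have hgint : ∀ i, Integrable (fun ω => g ω i) μ := fun i =>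
    (hg2 i).integrable (by norm_num)
  have hffint : ∀ i k, Integrable (fun ω => f ω i * f ω k) μ := fun i k =>
    int_mul2 (hf2 i) (hf2 k)
  have hggint : ∀ i k, Integrable (fun ω => g ω i * g ω k) μ := fun i k =>
    int_mul2 (hg2 i) (hg2 k)
  -- independence of coordinate products
  have hI1 : ∀ i j, IndepFun (fun ω => f ω i) (fun ω => g ω j) μ := fun i j =>
    hind.comp (measurable_pi_apply i) (measurable_pi_apply j)
  have hI2 : ∀ i k j l, IndepFun (fun ω => f ω i * f ω k) (fun ω => g ω j * g ω l) μ :=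
    fun i k j l => hind.comp ((measurable_pi_apply i).mul (measurable_pi_apply k))
      ((measurable_pi_apply j).mul (measurable_pi_apply l))
  have hEfg : ∀ i j, (∫ ω, f ω i * g ω j ∂μ) = μf i * μg j := by
    intro i j
    rw [hμf, hμg]
    exact (hI1 i j).integral_mul_eq_mul_integral (hfint i).aestronglyMeasurable (hgint j).aestronglyMeasurable
  have hEffgg : ∀ i k j l, (∫ ω, (f ω i * f ω k) * (g ω j * g ω l) ∂μ)
      = (∫ ω, f ω i * f ω k ∂μ) * (∫ ω, g ω j * g ω l ∂μ) := fun i k j l =>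
    (hI2 i k j l).integral_mul_eq_mul_integral (hffint i k).aestronglyMeasurable (hggint j l).aestronglyMeasurable
  have hquadint : ∀ i k j l, Integrable (fun ω => (f ω i * f ω k) * (g ω j * g ω l)) μ :=
    fun i k j l => (hI2 i k j l).integrable_mul (hffint i k) (hggint j l)
  -- moments
  have hF : ∀ i k, (∫ ω, f ω i * f ω k ∂μ) = Cf i k + μf i * μf k := by
    intro i k
    have h1 : (fun ω => (f ω i - μf i) * (f ω k - μf k))
        = fun ω => f ω i * f ω k - μf i * f ω k - μf k * f ω i + μf i * μf k := by
      funext ω; ring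
    have hB : Integrable (fun ω => f ω i * f ω k - μf i * f ω k) μ :=
      (hffint i k).sub ((hfint k).const_mul _)
    have hA : Integrable (fun ω => f ω i * f ω k - μf i * f ω k - μf k * f ω i) μ :=
      hB.sub ((hfint i).const_mul _)
    rw [hCf, h1, integral_add hA (integrable_const _),
      integral_sub hB ((hfint i).const_mul _),
      integral_sub (hffint i k) ((hfint k).const_mul _),
      integral_const_mul, integral_const_mul, integral_const, probReal_univ]
    rw [← hμf, ← hμf]
    simp; ring
  have hG : ∀ i k, (∫ ω, g ω i * g ω k ∂μ) = Cg i k + μg i * μg k := by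
    intro i k
    have h1 : (fun ω => (g ω i - μg i) * (g ω k - μg k))
        = fun ω => g ω i * g ω k - μg i * g ω k - μg k * g ω i + μg i * μg k := by
      funext ω; ring
    have hB : Integrable (fun ω => g ω i * g ω k - μg i * g ω k) μ :=
      (hggint i k).sub ((hgint k).const_mul _)
    have hA : Integrable (fun ω => g ω i * g ω k - μg i * g ω k - μg k * g ω i) μ :=
      hB.sub ((hgint i).const_mul _)
    rw [hCg, h1, integral_add hA (integrable_const _),
      integral_sub hB ((hgint i).const_mul _),
      integral_sub (hggint i k) ((hgint k).const_mul _),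
      integral_const_mul, integral_const_mul, integral_const, probReal_univ]
    rw [← hμg, ← hμg]
    simp; ring
  -- pointwise expansion of the bilinear form
  have hpt : ∀ ω, (f ω) ⬝ᵥ Q.mulVec (g ω) = ∑ i, ∑ j, Q i j * (f ω i * g ω j) := by
    intro ω
    simp only [dotProduct, Matrix.mulVec, dotProduct, Finset.mul_sum]
    exact Finset.sum_congr rfl fun i _ => Finset.sum_congr rfl fun j _ => by ring
  -- first moment
  have hE1 : (∫ ω, (f ω) ⬝ᵥ Q.mulVec (g ω) ∂μ) = ∑ i, ∑ j, Q i j * (μf i * μg j) := by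
    simp_rw [hpt]
    rw [integral_finset_sum _ (fun i _ => integrable_finset_sum _
      (fun j _ => (int_mul2 (hf2 i) (hg2 j)).const_mul (Q i j)))]
    refine Finset.sum_congr rfl fun i _ => ?_
    rw [integral_finset_sum _ (fun j _ => (int_mul2 (hf2 i) (hg2 j)).const_mul (Q i j))]
    refine Finset.sum_congr rfl fun j _ => ?_
    rw [integral_const_mul, hEfg]
  -- second moment
  have hptsq : ∀ ω, ((f ω) ⬝ᵥ Q.mulVec (g ω)) ^ 2
      = ∑ i, ∑ j, ∑ k, ∑ l, Q i j * Q k l * ((f ω i * f ω k) * (g ω j * g ω l)) := by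
    intro ω
    rw [hpt, sq_double_sum]
    exact Finset.sum_congr rfl fun i _ => Finset.sum_congr rfl fun j _ =>
      Finset.sum_congr rfl fun k _ => Finset.sum_congr rfl fun l _ => by ring
  have hE2 : (∫ ω, ((f ω) ⬝ᵥ Q.mulVec (g ω)) ^ 2 ∂μ)
      = ∑ i, ∑ j, ∑ k, ∑ l, Q i j * Q k l
          * ((Cf i k + μf i * μf k) * (Cg j l + μg j * μg l)) := by
    simp_rw [hptsq]
    rw [integral_finset_sum _ (fun i _ => integrable_finset_sum _ (fun j _ =>
      integrable_finset_sum _ (fun k _ => integrable_finset_sum _ (fun l _ =>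
        (hquadint i k j l).const_mul (Q i j * Q k l)))))]
    refine Finset.sum_congr rfl fun i _ => ?_
    rw [integral_finset_sum _ (fun j _ => integrable_finset_sum _ (fun k _ =>
      integrable_finset_sum _ (fun l _ => (hquadint i k j l).const_mul (Q i j * Q k l))))]
    refine Finset.sum_congr rfl fun j _ => ?_
    rw [integral_finset_sum _ (fun k _ => integrable_finset_sum _ (fun l _ =>
      (hquadint i k j l).const_mul (Q i j * Q k l)))]
    refine Finset.sum_congr rfl fun k _ => ?_
    rw [integral_finset_sum _ (fun l _ => (hquadint i k j l).const_mul (Q i j * Q k l))]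
    refine Finset.sum_congr rfl fun l _ => ?_
    rw [integral_const_mul, hEffgg, hF, hG]
  -- symmetry facts
  have hCgsymm : Cg.IsSymm := by
    ext i j
    simp only [Matrix.transpose_apply, hCg]
    exact integral_congr_ae (Filter.Eventually.of_forall fun ω => by ring)
  have hMf : (vecMulVec μf μf).IsSymm := by
    ext i j; simp [vecMulVec_apply, mul_comm]
  have hMg : (vecMulVec μg μg).IsSymm := by
    ext i j; simp [vecMulVec_apply, mul_comm]
  -- assemble
  rw [hE1, hE2, sq_double_sum, Matrix.trace_add, Matrix.trace_add,
    trace4 Q Cf Cg hQ hCgsymm, trace4 Q (vecMulVec μf μf) Cg hQ hCgsymm,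
    trace4 Q Cf (vecMulVec μg μg) hQ hMg]
  simp_rw [← Finset.sum_add_distrib, ← Finset.sum_sub_distrib]
  refine Finset.sum_congr rfl fun i _ => Finset.sum_congr rfl fun j _ =>
    Finset.sum_congr rfl fun k _ => Finset.sum_congr rfl fun l _ => ?_
  simp only [vecMulVec_apply]
  ring
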